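/- Fix constants m, b, s with m = s - 1. If the board consists of m pairwise disjoint d-stars with d = ⌈(b+1)/m⌉, plus the games proceed with Maker claiming m vertices and Breaker b vertices per turn, then Maker (moving first) has a winning strategy: Maker first claims the m centres, leaving at least b+1 pairwise disjoint edges each with s-1 = m unclaimed vertices; Breaker cannot touch all of them, so Maker completes an untouched edge on his second move. -/

import Mathlib

/-- A strategy maps the current position (Maker's claimed set, Breaker's claimed
set) to the set of vertices to be claimed next. -/
abbrev Strategy (V : Type*) := Finset V → Finset V → Finset V

/-- A strategy for a player claiming `k` vertices per turn is valid if each move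
consists of unclaimed vertices and has cardinality `k` (or all the remaining
unclaimed vertices if fewer than `k` remain). -/
def ValidStrategy {V : Type*} [Fintype V] [DecidableEq V] (k : ℕ) (f : Strategy V) : Prop :=
  ∀ M B : Finset V, Disjoint (f M B) (M ∪ B) ∧
    (f M B).card = min k (Fintype.card V - (M ∪ B).card)

/-- The position after `r` rounds of the game, Maker moving first in each round:
`(Maker's claimed set, Breaker's claimed set)`. -/
def play {V : Type*} [DecidableEq V] (ms bs : Strategy V) : ℕ → Finset V × Finset V
  | 0 => (∅, ∅)
  | r + 1 =>
    let q := play ms bs r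
    let M' := q.1 ∪ ms q.1 q.2
    (M', q.2 ∪ bs M' q.2)

/-- Maker wins the `(m, b)`-game on the board `E`: Maker has a valid strategy such
that against every valid Breaker strategy, at the end of the game Maker's claimed
set contains an edge of `E`. -/
def MakerWins {V : Type*} [Fintype V] [DecidableEq V] (m b : ℕ)
    (E : Finset (Finset V)) : Prop :=
  ∃ ms : Strategy V, ValidStrategy m ms ∧
    ∀ bs : Strategy V, ValidStrategy b bs →
      ∃ e ∈ E, e ⊆ (play ms bs (Fintype.card V)).1

/-- Breaker wins the `(m, b)`-game on the board `E`: Breaker has a valid strategy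
such that against every valid Maker strategy, Maker's final claimed set contains
no edge of `E`. -/
def BreakerWins {V : Type*} [Fintype V] [DecidableEq V] (m b : ℕ)
    (E : Finset (Finset V)) : Prop :=
  ∃ bs : Strategy V, ValidStrategy b bs ∧
    ∀ ms : Strategy V, ValidStrategy m ms →
      ∀ e ∈ E, ¬ e ⊆ (play ms bs (Fintype.card V)).1

section Aux
variable {V : Type*} [Fintype V] [DecidableEq V]

lemma pick_exists (U : Finset V) (k : ℕ) (pref : Finset V) :
    ∃ u : Finset V, u ⊆ U ∧ u.card = min k U.card ∧
      (pref ⊆ U → pref.card ≤ k → pref ⊆ u) := by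
  by_cases h : pref ⊆ U ∧ pref.card ≤ k
  · have hle : pref.card ≤ min k U.card := le_min h.2 (Finset.card_le_card h.1)
    obtain ⟨u, h1, h2, h3⟩ := Finset.exists_subsuperset_card_eq h.1 hle
      (min_le_right _ _)
    exact ⟨u, h2, by omega, fun _ _ => h1⟩
  · obtain ⟨u, h1, h2⟩ := Finset.exists_subset_card_eq (s := U) (n := min k U.card) (min_le_right _ _)
    exact ⟨u, h1, h2, fun ha hb => absurd ⟨ha, hb⟩ h⟩

noncomputable def pick (U : Finset V) (k : ℕ) (pref : Finset V) : Finset V :=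
  (pick_exists U k pref).choose

lemma pick_subset (U : Finset V) (k : ℕ) (pref : Finset V) : pick U k pref ⊆ U :=
  (pick_exists U k pref).choose_spec.1

lemma pick_card (U : Finset V) (k : ℕ) (pref : Finset V) :
    (pick U k pref).card = min k U.card :=
  (pick_exists U k pref).choose_spec.2.1

lemma pick_pref (U : Finset V) (k : ℕ) (pref : Finset V) (h1 : pref ⊆ U)
    (h2 : pref.card ≤ k) : pref ⊆ pick U k pref :=
  (pick_exists U k pref).choose_spec.2.2 h1 h2

noncomputable def mstrat (m : ℕ) (E : Finset (Finset V)) (C : Finset V) : Strategy V :=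
  fun M B =>
    pick (M ∪ B)ᶜ m
      (if M = ∅ then C
       else if h : ∃ e ∈ E, (e \ M).card ≤ m ∧ e \ M ⊆ (M ∪ B)ᶜ
         then h.choose \ M else ∅)

lemma mstrat_valid (m : ℕ) (E : Finset (Finset V)) (C : Finset V) :
    ValidStrategy m (mstrat m E C) := by
  intro M B
  refine ⟨Disjoint.mono_left (pick_subset _ _ _) ?_, ?_⟩
  · exact disjoint_compl_left
  · rw [mstrat]
    rw [pick_card, Finset.card_compl]

lemma play_fst_subset {V : Type*} [DecidableEq V] (ms bs : Strategy V) {r r' : ℕ}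
    (h : r ≤ r') : (play ms bs r).1 ⊆ (play ms bs r').1 := by
  induction h with
  | refl => exact subset_rfl
  | step h ih => exact ih.trans (by simp [play])

end Aux

/-- If `m = s - 1 ≥ 1` and the board is the union of `m` pairwise vertex-disjoint
`d`-stars with `d = ⌈(b+1)/m⌉` (each star consisting of `d` edges of size `s`,
any two of which intersect exactly in the common centre), then Maker (moving
first) has a winning strategy in the `(m, b)`-game. -/
theorem stmt7 {V : Type*} [Fintype V] [DecidableEq V] (m b s d : ℕ)
    (hm : 1 ≤ m) (hms : m = s - 1) (hs : 2 ≤ s) (hd : d = (b + m) / m)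
    (E : Finset (Finset V))
    (S : Fin m → Finset (Finset V)) (c : Fin m → V)
    (hboard : ∀ e, e ∈ E ↔ ∃ i, e ∈ S i)
    (hcardS : ∀ i, (S i).card = d)
    (hedge : ∀ i, ∀ e ∈ S i, e.card = s ∧ c i ∈ e)
    (hstar : ∀ i, ∀ e ∈ S i, ∀ e' ∈ S i, e ≠ e' → e ∩ e' = {c i})
    (hdisj : ∀ i j, i ≠ j → Disjoint ((S i).biUnion id) ((S j).biUnion id)) :
    MakerWins m b E := by
  classical
  set C : Finset V := Finset.univ.image c with hCdef
  have hd1 : 1 ≤ d := by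
    rw [hd]; exact (Nat.one_le_div_iff (by omega)).mpr (by omega)
  have hSne : ∀ i, (S i).Nonempty := fun i =>
    Finset.card_pos.mp (by rw [hcardS]; omega)
  have hmemU : ∀ i, c i ∈ (S i).biUnion id := fun i => by
    obtain ⟨e, he⟩ := hSne i
    exact Finset.mem_biUnion.mpr ⟨e, he, (hedge i e he).2⟩
  have hcinj : Function.Injective c := by
    intro i j hij
    by_contra hne
    exact Finset.disjoint_left.mp (hdisj i j hne) (hmemU i) (hij ▸ hmemU j)
  have hCcard : C.card = m := by
    rw [hCdef, Finset.card_image_of_injective _ hcinj, Finset.card_univ, Fintype.card_fin]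
  have hmV : m ≤ Fintype.card V := hCcard ▸ Finset.card_le_univ C
  -- edges from distinct stars are distinct; intersections of distinct edges lie in C
  have hsep : ∀ e ∈ E, ∀ e' ∈ E, e ≠ e' → ∀ v, v ∈ e → v ∈ e' → v ∈ C := by
    intro e he e' he' hne v hv hv'
    obtain ⟨i, hei⟩ := (hboard e).1 he
    obtain ⟨j, hej⟩ := (hboard e').1 he'
    by_cases hij : i = j
    · subst hij
      have := hstar i e hei e' hej hne
      have hvc : v ∈ e ∩ e' := Finset.mem_inter.mpr ⟨hv, hv'⟩
      rw [this, Finset.mem_singleton] at hvc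
      exact hvc ▸ Finset.mem_image.mpr ⟨i, Finset.mem_univ i, rfl⟩
    · exact absurd (Finset.mem_biUnion.mpr ⟨e', hej, hv'⟩)
        (Finset.disjoint_left.mp (hdisj i j hij) (Finset.mem_biUnion.mpr ⟨e, hei, hv⟩))
  have hEeq : E = Finset.univ.biUnion S := by
    ext e; simp [hboard e, Finset.mem_biUnion]
  have hEcard : E.card = m * d := by
    rw [hEeq, Finset.card_biUnion]
    · simp [hcardS, Finset.sum_const, Finset.card_univ, mul_comm]
    · intro i _ j _ hij
      rw [Function.onFun, Finset.disjoint_left]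
      intro e hei hej
      exact Finset.disjoint_left.mp (hdisj i j hij)
        (Finset.mem_biUnion.mpr ⟨e, hei, (hedge i e hei).2⟩)
        (Finset.mem_biUnion.mpr ⟨e, hej, (hedge i e hei).2⟩)
  have hbE : b + 1 ≤ E.card := by
    rw [hEcard, hd]
    obtain ⟨p, r, hpr, hrm, hp⟩ :
        ∃ p r, p + r = b + m ∧ r < m ∧ p = m * ((b + m) / m) :=
      ⟨_, _, Nat.div_add_mod _ _, Nat.mod_lt _ (by omega), rfl⟩
    omega
  set ms : Strategy V := mstrat m E C with hmsdef
  refine ⟨ms, mstrat_valid m E C, fun bs hbs => ?_⟩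
  -- round 1
  have hmove1 : ms ∅ ∅ = C := by
    have hun : mstrat m E C ∅ ∅ = pick ((∅ ∪ ∅ : Finset V)ᶜ) m C := by
      rw [mstrat, if_pos rfl]
    have hCsub : C ⊆ ((∅ ∪ ∅ : Finset V)ᶜ) := by simp
    have h1 : C ⊆ ms ∅ ∅ := by
      rw [hmsdef, hun]
      exact pick_pref _ _ _ hCsub (by omega)
    have h2 : (ms ∅ ∅).card ≤ C.card := by
      rw [hmsdef, hun, pick_card, hCcard]
      simp [hmV]
    exact (Finset.eq_of_subset_of_card_le h1 h2).symm
  have h1 : play ms bs 1 = (C, bs C ∅) := by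
    simp [play, hmove1]
  set B1 : Finset V := bs C ∅ with hB1def
  have hB1spec := hbs C ∅
  have hB1card : B1.card ≤ b := by
    rw [hB1def, hB1spec.2]; exact min_le_left _ _
  have hB1C : Disjoint B1 C := by
    have := hB1spec.1
    simp only [Finset.union_empty] at this
    exact this
  -- key: an untouched petal exists
  have hex : ∃ e ∈ E, (e \ C).card ≤ m ∧ e \ C ⊆ (C ∪ B1)ᶜ := by
    have hgood : ∃ e ∈ E, Disjoint (e \ C) B1 := by
      by_contra hcon
      push_neg at hcon
      have hne : ∀ e ∈ E, ((e \ C) ∩ B1).Nonempty := fun e he =>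
        Finset.not_disjoint_iff_nonempty_inter.mp (hcon e he)
      have hVne : Nonempty V := ⟨c ⟨0, hm⟩⟩
      set f : Finset V → V := fun e =>
        if h : ((e \ C) ∩ B1).Nonempty then h.choose else Classical.arbitrary V with hf
      have hmaps : ∀ e ∈ E, f e ∈ (e \ C) ∩ B1 := by
        intro e he
        have h := hne e he
        rw [hf]; simp only [dif_pos h]
        exact h.choose_spec
      have hinj : Set.InjOn f ↑E := by
        intro e he e' he' hfe
        by_contra hne'
        have hv1 := hmaps e he
        have hv2 := hmaps e' he'
        rw [Finset.mem_inter, Finset.mem_sdiff] at hv1 hv2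
        exact hv1.1.2 (hsep e he e' he' hne' (f e) hv1.1.1 (hfe ▸ hv2.1.1))
      have hle : E.card ≤ B1.card :=
        Finset.card_le_card_of_injOn f
          (fun e he => (Finset.mem_inter.mp (hmaps e he)).2) hinj
      omega
    obtain ⟨e, he, hdisjB⟩ := hgood
    obtain ⟨i, hei⟩ := (hboard e).1 he
    have hci : c i ∈ e := (hedge i e hei).2
    have hcard : (e \ C).card ≤ m := by
      have hsub : e \ C ⊆ e.erase (c i) := by
        intro v hv
        rw [Finset.mem_sdiff] at hv
        exact Finset.mem_erase.mpr
          ⟨fun hvc => hv.2 (hvc ▸ Finset.mem_image.mpr ⟨i, Finset.mem_univ i, rfl⟩), hv.1⟩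
      calc (e \ C).card ≤ (e.erase (c i)).card := Finset.card_le_card hsub
        _ = e.card - 1 := Finset.card_erase_of_mem hci
        _ = s - 1 := by rw [(hedge i e hei).1]
        _ = m := hms.symm
    refine ⟨e, he, hcard, fun v hv => ?_⟩
    rw [Finset.mem_sdiff] at hv
    rw [Finset.mem_compl, Finset.mem_union]
    push_neg
    exact ⟨hv.2, fun hvB => Finset.disjoint_right.mp hdisjB hvB (Finset.mem_sdiff.mpr hv)⟩
  -- round 2
  have hCne : C ≠ ∅ := by
    intro h; rw [h] at hCcard; simp at hCcard; omega
  obtain ⟨he0E, he0card, he0sub⟩ := hex.choose_spec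
  set e0 : Finset V := hex.choose with he0def
  have hunfold2 : ms C B1 = pick ((C ∪ B1)ᶜ) m (e0 \ C) := by
    rw [hmsdef, mstrat, if_neg hCne, dif_pos hex]
  have hprefsub : e0 \ C ⊆ ms C B1 := by
    rw [hunfold2]
    exact pick_pref _ _ _ he0sub he0card
  have he0M2 : e0 ⊆ (play ms bs 2).1 := by
    have h2 : (play ms bs 2).1 = C ∪ ms C B1 := by
      rw [show (2 : ℕ) = 1 + 1 from rfl]
      simp only [play, hmove1, Finset.empty_union]
      rfl
    rw [h2]
    intro v hv
    by_cases hvC : v ∈ C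
    · exact Finset.mem_union_left _ hvC
    · exact Finset.mem_union_right _ (hprefsub (Finset.mem_sdiff.mpr ⟨hv, hvC⟩))
  have h2V : 2 ≤ Fintype.card V := by
    obtain ⟨i0, hei0⟩ := (hboard e0).1 he0E
    have h1' : e0.card = s := (hedge i0 e0 hei0).1
    have := Finset.card_le_univ e0
    omega
  exact ⟨e0, he0E, he0M2.trans (play_fst_subset ms bs h2V)⟩
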